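/- Let h : ℝⁿ → ℝ be L-smooth and σ-hypoconvex, and 0 < γ < 1/[σ]₋. Then prox_{γh} is (1/(1+γL))-strongly monotone and (1+γσ)-cocoercive: for all s, s' with u = prox_{γh}(s), u' = prox_{γh}(s'), one has ⟨u - u', s - s'⟩ ≥ (1/(1+γL))‖s - s'‖² and ⟨u - u', s - s'⟩ ≥ (1+γσ)‖u - u'‖². In particular (1/(1+γL))‖s-s'‖ ≤ ‖u-u'‖ ≤ (1/(1+γσ))‖s-s'‖. -/

import Mathlib

open Set Filter InnerProductSpace

local notation "⟪" x ", " y "⟫" => @inner ℝ _ _ x y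

variable {E : Type*} [NormedAddCommGroup E] [InnerProductSpace ℝ E] [CompleteSpace E]

lemma aux_quad_deriv (a b c t : ℝ) :
    HasDerivAt (fun t : ℝ => a + b * t + c * t ^ 2) (b + 2 * c * t) t := by
  have h1 : HasDerivAt (fun t : ℝ => t) 1 t := hasDerivAt_id t
  have h2 := ((h1.const_mul b).const_add a).add ((hasDerivAt_pow 2 t).const_mul c)
  refine h2.congr_deriv ?_
  push_cast
  ring

lemma aux_norm_expand (x v : E) (t : ℝ) :
    ‖x + t • v‖ ^ 2 = ‖x‖ ^ 2 + (2 * ⟪x, v⟫) * t + ‖v‖ ^ 2 * t ^ 2 := by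
  have h1 : ‖t • v‖ ^ 2 = ‖v‖ ^ 2 * t ^ 2 := by
    rw [norm_smul, Real.norm_eq_abs, mul_pow, sq_abs]; ring
  rw [norm_add_sq_real, real_inner_smul_right, h1]; ring

lemma aux_hasDerivAt_line (h : E → ℝ) (hd : Differentiable ℝ h) (x v : E) (t : ℝ) :
    HasDerivAt (fun t : ℝ => h (x + t • v)) ⟪gradient h (x + t • v), v⟫ t := by
  have hc : HasDerivAt (fun t : ℝ => x + t • v) v t := by
    simpa using ((hasDerivAt_id t).smul_const v).const_add x
  have h2 := (hd (x + t • v)).hasFDerivAt.comp_hasDerivAt t hc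
  have h3 : ⟪gradient h (x + t • v), v⟫ = fderiv ℝ h (x + t • v) v := by
    rw [gradient]; exact toDual_symm_apply
  rw [h3]
  exact h2

set_option linter.unusedSectionVars false

lemma aux_prox_foc (h : E → ℝ) (hd : Differentiable ℝ h) {γ : ℝ} (hγ0 : 0 < γ) (s u : E)
    (hu : IsMinOn (fun w => h w + 1 / (2 * γ) * ‖w - s‖ ^ 2) Set.univ u) :
    s - u = γ • gradient h u := by
  have hv : ∀ v : E, ⟪gradient h u, v⟫ + (1 / γ) * ⟪u - s, v⟫ = 0 := by
    intro v
    set φ : ℝ → ℝ := fun t => h (u + t • v) + 1 / (2 * γ) * ‖u + t • v - s‖ ^ 2 with hφdef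
    have hmin : IsLocalMin φ 0 := by
      refine Filter.Eventually.of_forall fun t => ?_
      have h0 : φ 0 = h u + 1 / (2 * γ) * ‖u - s‖ ^ 2 := by simp [hφdef]
      have ht := isMinOn_iff.mp hu (u + t • v) (mem_univ _)
      rw [h0]; exact ht
    have hq : HasDerivAt (fun t : ℝ => 1 / (2 * γ) * ‖u + t • v - s‖ ^ 2)
        ((1 / γ) * ⟪u - s, v⟫) 0 := by
      have heq : (fun t : ℝ => 1 / (2 * γ) * (‖u - s‖ ^ 2 + (2 * ⟪u - s, v⟫) * t + ‖v‖ ^ 2 * t ^ 2))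
          = fun t : ℝ => 1 / (2 * γ) * ‖u + t • v - s‖ ^ 2 := by
        funext t
        rw [show u + t • v - s = (u - s) + t • v by abel, aux_norm_expand]
      have h2 := (aux_quad_deriv (‖u - s‖ ^ 2) (2 * ⟪u - s, v⟫) (‖v‖ ^ 2) 0).const_mul (1 / (2 * γ))
      rw [heq] at h2
      refine h2.congr_deriv ?_
      field_simp
      ring
    have hφ' : HasDerivAt φ (⟪gradient h u, v⟫ + (1 / γ) * ⟪u - s, v⟫) 0 := by
      have h1 := (aux_hasDerivAt_line h hd u v 0).add hq
      simp only [zero_smul, add_zero] at h1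
      exact h1
    exact hmin.hasDerivAt_eq_zero hφ'
  have hkey := hv (gradient h u + (1 / γ) • (u - s))
  rw [show ⟪gradient h u, gradient h u + (1 / γ) • (u - s)⟫ + (1 / γ) *
      ⟪u - s, gradient h u + (1 / γ) • (u - s)⟫
      = ⟪gradient h u + (1 / γ) • (u - s), gradient h u + (1 / γ) • (u - s)⟫ by
    rw [inner_add_left, real_inner_smul_left]] at hkey
  have hz : gradient h u + (1 / γ) • (u - s) = 0 := inner_self_eq_zero.mp hkey
  have : gradient h u = (1 / γ) • (s - u) := by
    have := eq_neg_of_add_eq_zero_left hz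
    rw [this, ← smul_neg, neg_sub]
  rw [this, smul_smul, mul_one_div, div_self hγ0.ne', one_smul]

lemma aux_line_convex (f : E → ℝ) (hf : ConvexOn ℝ Set.univ f) (x v : E) :
    ConvexOn ℝ Set.univ (fun t : ℝ => f (x + t • v)) := by
  have h1 := hf.comp_affineMap (AffineMap.lineMap x (x + v) : ℝ →ᵃ[ℝ] E)
  simp only [preimage_univ] at h1
  refine (congrArg (ConvexOn ℝ univ) ?_).mpr h1
  funext t
  simp [Function.comp, AffineMap.lineMap_apply_module']
  rw [add_comm]

lemma aux_hypo_grad_ineq (h : E → ℝ) (hd : Differentiable ℝ h) {σ : ℝ}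
    (hhyp : ConvexOn ℝ Set.univ (fun x => h x - σ / 2 * ‖x‖ ^ 2)) (x y : E) :
    h x + ⟪gradient h x, y - x⟫ + σ / 2 * ‖y - x‖ ^ 2 ≤ h y := by
  set Δ := y - x with hΔ
  have hφc : ConvexOn ℝ Set.univ (fun t : ℝ => h (x + t • Δ) - σ / 2 * ‖x + t • Δ‖ ^ 2) :=
    aux_line_convex _ hhyp x Δ
  have hq : HasDerivAt (fun t : ℝ => σ / 2 * ‖x + t • Δ‖ ^ 2) (σ * ⟪x, Δ⟫) 0 := by
    have h2 := (aux_quad_deriv (‖x‖ ^ 2) (2 * ⟪x, Δ⟫) (‖Δ‖ ^ 2) 0).const_mul (σ / 2)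
    have heq : (fun t : ℝ => σ / 2 * (‖x‖ ^ 2 + (2 * ⟪x, Δ⟫) * t + ‖Δ‖ ^ 2 * t ^ 2))
        = fun t : ℝ => σ / 2 * ‖x + t • Δ‖ ^ 2 := by
      funext t; rw [aux_norm_expand]
    rw [heq] at h2
    refine h2.congr_deriv ?_
    ring
  have hφ' : HasDerivAt (fun t : ℝ => h (x + t • Δ) - σ / 2 * ‖x + t • Δ‖ ^ 2)
      (⟪gradient h x, Δ⟫ - σ * ⟪x, Δ⟫) 0 := by
    have h1 := (aux_hasDerivAt_line h hd x Δ 0).sub hq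
    simp only [zero_smul, add_zero] at h1
    exact h1
  have hs := hφc.le_slope_of_hasDerivAt (mem_univ (0:ℝ)) (mem_univ (1:ℝ)) one_pos hφ'
  rw [slope_def_field] at hs
  have h10 : x + (1:ℝ) • Δ = y := by rw [one_smul, hΔ]; abel
  have h00 : x + (0:ℝ) • Δ = x := by simp
  rw [h10, h00] at hs
  have hny : ‖y‖ ^ 2 = ‖x‖ ^ 2 + (2 * ⟪x, Δ⟫) * 1 + ‖Δ‖ ^ 2 * 1 ^ 2 := by
    rw [← aux_norm_expand, h10]
  simp only [sub_zero, div_one] at hs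
  have hny' : σ / 2 * ‖y‖ ^ 2 = σ / 2 * (‖x‖ ^ 2 + 2 * ⟪x, Δ⟫ * 1 + ‖Δ‖ ^ 2 * 1 ^ 2) := by
    rw [hny]
  linarith [hs, hny']

lemma aux_descent (h : E → ℝ) (hd : Differentiable ℝ h) {L : ℝ}
    (hLip : ∀ x y, ‖gradient h x - gradient h y‖ ≤ L * ‖x - y‖) (x y : E) :
    h y ≤ h x + ⟪gradient h x, y - x⟫ + L / 2 * ‖y - x‖ ^ 2 := by
  set Δ := y - x with hΔ
  set ψ : ℝ → ℝ := fun t => h (x + t • Δ) - (0 + ⟪gradient h x, Δ⟫ * t + (L / 2 * ‖Δ‖ ^ 2) * t ^ 2)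
    with hψdef
  have hψd : ∀ t : ℝ, HasDerivAt ψ
      (⟪gradient h (x + t • Δ), Δ⟫ - (⟪gradient h x, Δ⟫ + L * ‖Δ‖ ^ 2 * t)) t := by
    intro t
    have h1 := (aux_hasDerivAt_line h hd x Δ t).sub
      (aux_quad_deriv 0 (⟪gradient h x, Δ⟫) (L / 2 * ‖Δ‖ ^ 2) t)
    refine h1.congr_deriv ?_
    ring
  have hanti : AntitoneOn ψ (Icc (0:ℝ) 1) := by
    apply antitoneOn_of_deriv_nonpos (convex_Icc 0 1)
    · exact (Differentiable.continuous (fun t => (hψd t).differentiableAt)).continuousOn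
    · exact fun t _ => ((hψd t).differentiableAt).differentiableWithinAt
    · intro t ht
      rw [interior_Icc] at ht
      rw [(hψd t).deriv]
      have h1 := real_inner_le_norm (gradient h (x + t • Δ) - gradient h x) Δ
      have h2 := hLip (x + t • Δ) x
      have h3 : x + t • Δ - x = t • Δ := by abel
      rw [h3, norm_smul, Real.norm_eq_abs, abs_of_pos ht.1] at h2
      rw [inner_sub_left] at h1
      nlinarith [norm_nonneg Δ, mul_le_mul_of_nonneg_right h2 (norm_nonneg Δ), ht.1.le]
  have hfin := hanti (left_mem_Icc.mpr zero_le_one) (right_mem_Icc.mpr zero_le_one) zero_le_one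
  have h10 : x + (1:ℝ) • Δ = y := by rw [one_smul, hΔ]; abel
  have h00 : x + (0:ℝ) • Δ = x := by simp
  simp only [hψdef, h10, h00] at hfin
  nlinarith [hfin]

lemma aux_interp (h : E → ℝ) (hd : Differentiable ℝ h) {σ L : ℝ} (hσL : σ < L)
    (hLip : ∀ x y, ‖gradient h x - gradient h y‖ ≤ L * ‖x - y‖)
    (hhyp : ConvexOn ℝ Set.univ (fun x => h x - σ / 2 * ‖x‖ ^ 2)) (x y : E) :
    ‖gradient h x - gradient h y‖ ^ 2 + σ * L * ‖x - y‖ ^ 2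
      ≤ (L + σ) * ⟪gradient h x - gradient h y, x - y⟫ := by
  set B : E → E → ℝ := fun a b => h b - h a - ⟪gradient h a, b - a⟫ - σ / 2 * ‖b - a‖ ^ 2
    with hBdef
  have hB0 : ∀ a b, 0 ≤ B a b := by
    intro a b
    have := aux_hypo_grad_ineq h hd hhyp a b
    simp only [hBdef]
    linarith
  have hBdesc : ∀ a b z, B a z ≤ B a b
      + ⟪gradient h b - gradient h a - σ • (b - a), z - b⟫ + (L - σ) / 2 * ‖z - b‖ ^ 2 := by
    intro a b z
    have hdes := aux_descent h hd hLip b z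
    have hzab : z - a = (b - a) + (z - b) := by abel
    have hnorm : ‖z - a‖ ^ 2 = ‖b - a‖ ^ 2 + 2 * ⟪b - a, z - b⟫ + ‖z - b‖ ^ 2 := by
      rw [hzab, norm_add_sq_real]
    have hinner : ⟪gradient h a, z - a⟫ = ⟪gradient h a, b - a⟫ + ⟪gradient h a, z - b⟫ := by
      rw [hzab, inner_add_right]
    have hG : ⟪gradient h b - gradient h a - σ • (b - a), z - b⟫
        = ⟪gradient h b, z - b⟫ - ⟪gradient h a, z - b⟫ - σ * ⟪b - a, z - b⟫ := by
      rw [inner_sub_left, inner_sub_left, real_inner_smul_left]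
    simp only [hBdef]
    rw [hG, hnorm, hinner]
    linarith
  clear_value B
  have hGB : ∀ a b, ‖gradient h b - gradient h a - σ • (b - a)‖ ^ 2 ≤ 2 * (L - σ) * B a b := by
    intro a b
    set G := gradient h b - gradient h a - σ • (b - a) with hGdef
    set c : ℝ := (L - σ)⁻¹ with hcdef
    have hcpos : 0 < c := inv_pos.mpr (by linarith)
    clear_value G
    have hc1 : (L - σ) * c = 1 := mul_inv_cancel₀ (by linarith)
    have h1 := hBdesc a b (b - c • G)
    have h0 := hB0 a (b - c • G)
    rw [← hGdef] at h1
    have hzb : (b - c • G) - b = -(c • G) := by abel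
    rw [hzb] at h1
    have hi : ⟪G, -(c • G)⟫ = -(c * ‖G‖ ^ 2) := by
      rw [inner_neg_right, real_inner_smul_right, real_inner_self_eq_norm_sq]
    have hn : ‖-(c • G)‖ ^ 2 = c ^ 2 * ‖G‖ ^ 2 := by
      rw [norm_neg, norm_smul, Real.norm_eq_abs, mul_pow, sq_abs]
    rw [hi, hn] at h1
    have hne : L - σ ≠ 0 := by linarith
    have hc2 : (L - σ) / 2 * (c ^ 2 * ‖G‖ ^ 2) = c / 2 * ‖G‖ ^ 2 := by
      rw [hcdef]; field_simp
    rw [hc2] at h1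
    have h3 : c / 2 * ‖G‖ ^ 2 ≤ B a b := by linarith
    have h4 := mul_le_mul_of_nonneg_left h3 (by linarith : (0:ℝ) ≤ 2 * (L - σ))
    have h5 : 2 * (L - σ) * (c / 2 * ‖G‖ ^ 2) = ‖G‖ ^ 2 := by
      rw [hcdef]; field_simp
    linarith [h4, h5]
  have h1 := hGB y x
  have h2 := hGB x y
  set g' := gradient h x - gradient h y with hg'def
  set D := x - y with hDdef
  have hGxy : gradient h y - gradient h x - σ • (y - x) = -(g' - σ • D) := by
    simp only [hg'def, hDdef, smul_sub]
    abel
  rw [hGxy, norm_neg] at h2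
  clear_value g' D
  have hsum : B y x + B x y = ⟪g', D⟫ - σ * ‖D‖ ^ 2 := by
    simp only [hBdef, hg'def, hDdef]
    rw [show y - x = -(x - y) by abel]
    simp only [inner_neg_right, norm_neg, inner_sub_left]
    ring
  have hexp : ‖g' - σ • D‖ ^ 2 = ‖g'‖ ^ 2 - 2 * (σ * ⟪g', D⟫) + σ ^ 2 * ‖D‖ ^ 2 := by
    rw [norm_sub_sq_real, real_inner_smul_right, norm_smul, Real.norm_eq_abs, mul_pow, sq_abs]
  rw [hexp] at h1 h2
  have hsum2 : 2 * (L - σ) * B y x + 2 * (L - σ) * B x y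
      = 2 * (L - σ) * (⟪g', D⟫ - σ * ‖D‖ ^ 2) := by
    linear_combination (2 * (L - σ)) * hsum
  linarith [h1, h2, hsum2]

set_option maxHeartbeats 1000000


/-- For `h` `L`-smooth and `σ`-hypoconvex and `0 < γ < 1/[σ]₋`, the proximal
mapping is `(1/(1+γL))`-strongly monotone and `(1+γσ)`-cocoercive, and in particular
`(1/(1+γL))‖s-s'‖ ≤ ‖u-u'‖ ≤ (1/(1+γσ))‖s-s'‖` for `u = prox_{γh}(s)`, `u' = prox_{γh}(s')`. -/
theorem prox_strongly_monotone_cocoercive {n : ℕ}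
    (h : EuclideanSpace ℝ (Fin n) → ℝ) (L σ γ : ℝ) (hσ : σ ∈ Set.Icc (-L) L)
    (hC1 : ContDiff ℝ 1 h)
    (hLip : ∀ x y, ‖gradient h x - gradient h y‖ ≤ L * ‖x - y‖)
    (hhyp : ConvexOn ℝ Set.univ (fun x => h x - σ / 2 * ‖x‖ ^ 2))
    (hγ0 : 0 < γ) (hγ : γ * max 0 (-σ) < 1)
    (s s' u u' : EuclideanSpace ℝ (Fin n))
    (hu : IsMinOn (fun w => h w + 1 / (2 * γ) * ‖w - s‖ ^ 2) Set.univ u)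
    (hu' : IsMinOn (fun w => h w + 1 / (2 * γ) * ‖w - s'‖ ^ 2) Set.univ u') :
    (inner ℝ (u - u') (s - s') : ℝ) ≥ 1 / (1 + γ * L) * ‖s - s'‖ ^ 2 ∧
    (inner ℝ (u - u') (s - s') : ℝ) ≥ (1 + γ * σ) * ‖u - u'‖ ^ 2 ∧
    1 / (1 + γ * L) * ‖s - s'‖ ≤ ‖u - u'‖ ∧
    ‖u - u'‖ ≤ 1 / (1 + γ * σ) * ‖s - s'‖ := by
  have hd : Differentiable ℝ h := hC1.differentiable one_ne_zero
  obtain ⟨hσl, hσr⟩ := hσ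
  have hL0 : 0 ≤ L := by linarith
  have h1γσ : 0 < 1 + γ * σ := by
    rcases le_or_gt 0 σ with hs0 | hs0
    · nlinarith
    · have hh : γ * (-σ) ≤ γ * max 0 (-σ) := mul_le_mul_of_nonneg_left (le_max_right _ _) hγ0.le
      nlinarith
  have h1γL : 0 < 1 + γ * L := by nlinarith
  have hfocu : s - u = γ • gradient h u := aux_prox_foc h hd hγ0 s u hu
  have hfocu' : s' - u' = γ • gradient h u' := aux_prox_foc h hd hγ0 s' u' hu'
  set Δ := u - u' with hΔdef
  set g := gradient h u - gradient h u' with hgdef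
  have hS : s - s' = Δ + γ • g := by
    have h1 : s - s' = (u - u') + (γ • gradient h u - γ • gradient h u') := by
      rw [← hfocu, ← hfocu']; abel
    rw [h1, ← smul_sub]
  have hm : σ * ‖Δ‖ ^ 2 ≤ ⟪g, Δ⟫ := by
    have h1 := aux_hypo_grad_ineq h hd hhyp u u'
    have h2 := aux_hypo_grad_ineq h hd hhyp u' u
    rw [show u' - u = -(u - u') by abel, inner_neg_right, norm_neg] at h1
    have e3 : ⟪g, Δ⟫ = ⟪gradient h u, u - u'⟫ - ⟪gradient h u', u - u'⟫ :=
      inner_sub_left _ _ _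
    linarith
  have hr : ‖g‖ ≤ L * ‖Δ‖ := hLip u u'
  have hcs : ⟪g, Δ⟫ ≤ ‖g‖ * ‖Δ‖ := real_inner_le_norm g Δ
  have hIP : ⟪Δ, s - s'⟫ = ‖Δ‖ ^ 2 + γ * ⟪g, Δ⟫ := by
    rw [hS, inner_add_right, real_inner_smul_right, real_inner_self_eq_norm_sq,
      real_inner_comm]
  have hSn : ‖s - s'‖ ^ 2 = ‖Δ‖ ^ 2 + 2 * γ * ⟪g, Δ⟫ + γ ^ 2 * ‖g‖ ^ 2 := by
    rw [hS, norm_add_sq_real, real_inner_smul_right, norm_smul, Real.norm_eq_abs,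
      abs_of_pos hγ0, mul_pow, real_inner_comm]
    ring
  have hP1 : 0 ≤ L ^ 2 * ‖Δ‖ ^ 2 - ‖g‖ ^ 2 := by
    nlinarith [mul_nonneg (norm_nonneg g) (norm_nonneg Δ), norm_nonneg g, norm_nonneg Δ]
  have hkey : 0 ≤ L * ‖Δ‖ ^ 2 + (γ * L - 1) * ⟪g, Δ⟫ - γ * ‖g‖ ^ 2 := by
    rcases le_or_gt (γ * L) 1 with hcase | hcase
    · have hA : 0 ≤ (1 - γ * L) * (‖g‖ * ‖Δ‖ - ⟪g, Δ⟫) :=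
        mul_nonneg (by linarith) (by linarith)
      have hB : 0 ≤ (γ * ‖g‖) * (L * ‖Δ‖ - ‖g‖) :=
        mul_nonneg (mul_nonneg hγ0.le (norm_nonneg g)) (by linarith)
      have hC : 0 ≤ ‖Δ‖ * (L * ‖Δ‖ - ‖g‖) :=
        mul_nonneg (norm_nonneg Δ) (by linarith)
      nlinarith [hA, hB, hC]
    · have hσL : -L < σ := by
        by_contra hc
        push_neg at hc
        have hh1 : L ≤ max 0 (-σ) := le_max_of_le_right (by linarith)
        have hh2 := mul_le_mul_of_nonneg_left hh1 hγ0.le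
        linarith
      rcases eq_or_lt_of_le hσr with heq | hlt
      · rw [heq] at hm
        have hA : 0 ≤ (γ * L - 1) * (⟪g, Δ⟫ - L * ‖Δ‖ ^ 2) :=
          mul_nonneg (by linarith) (by linarith)
        have hB : 0 ≤ γ * (L ^ 2 * ‖Δ‖ ^ 2 - ‖g‖ ^ 2) := mul_nonneg hγ0.le hP1
        nlinarith [hA, hB]
      · have hint := aux_interp h hd hlt hLip hhyp u u'
        have hLσ : 0 < L + σ := by linarith
        have hA : 0 ≤ (1 + γ * σ) * (L ^ 2 * ‖Δ‖ ^ 2 - ‖g‖ ^ 2) :=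
          mul_nonneg h1γσ.le hP1
        have hB : 0 ≤ (γ * L - 1) * ((L + σ) * ⟪g, Δ⟫ - ‖g‖ ^ 2 - σ * L * ‖Δ‖ ^ 2) :=
          mul_nonneg (by linarith) (by linarith)
        nlinarith [hA, hB, hLσ]
  refine ⟨?_, ?_, ?_, ?_⟩
  · rw [ge_iff_le, one_div, inv_mul_eq_div, div_le_iff₀ h1γL, hIP, hSn]
    nlinarith [mul_nonneg hγ0.le hkey]
  · rw [ge_iff_le, hIP]
    nlinarith [mul_le_mul_of_nonneg_left hm hγ0.le]
  · have hSb : ‖s - s'‖ ≤ (1 + γ * L) * ‖Δ‖ := by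
      rw [hS]
      have h1 := norm_add_le Δ (γ • g)
      rw [norm_smul, Real.norm_eq_abs, abs_of_pos hγ0] at h1
      nlinarith [mul_le_mul_of_nonneg_left hr hγ0.le]
    rw [one_div, inv_mul_eq_div, div_le_iff₀ h1γL]
    linarith
  · have hd2 : (1 + γ * σ) * ‖Δ‖ ^ 2 ≤ ‖Δ‖ * ‖s - s'‖ := by
      have h1 := real_inner_le_norm Δ (s - s')
      rw [hIP] at h1
      nlinarith [mul_le_mul_of_nonneg_left hm hγ0.le]
    rw [one_div, inv_mul_eq_div, le_div_iff₀ h1γσ]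
    rcases eq_or_lt_of_le (norm_nonneg Δ) with hd0 | hd0
    · rw [← hd0]
      simpa using norm_nonneg (s - s')
    · have h2 := (mul_le_mul_iff_right₀ hd0).mp
        (show ‖Δ‖ * ((1 + γ * σ) * ‖Δ‖) ≤ ‖Δ‖ * ‖s - s'‖ by nlinarith [hd2])
      linarith
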